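/- Generalized main theorem, no-arrows case: let w_0, …, w_q be vectors in ℂ^n, viewed as activation tensors of a (q+1)-node network with no arrows. Apply the blow/forget procedure to get order-(q+1) tensors B_0, …, B_q (B_j places w_j in position j, blows for j < q, and forgets all other positions). Then the BMP ∘(B_q, B_0, B_1, …, B_{q-1}) equals the rank-1 tensor w_0 ⊗ w_1 ⊗ ⋯ ⊗ w_q, i.e., its entry at (i_0,…,i_q) is (w_0)_{i_0}⋯(w_q)_{i_q}. -/

import Mathlib

/-- The order-(q+1) tensor `B_j` produced by the blow/forget procedure from the
activation vector `w_j` of node `b_j` in a network with no arrows: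
for `j < q`, `(B_j)_{i_0,…,i_q} = (w_j)_{i_j}·[i_{j+1} = i_0]` (blow and
forgets); for `j = q`, `(B_q)_{i_0,…,i_q} = (w_q)_{i_q}`. -/
def procTensor {n q : ℕ} (w : Fin (q + 1) → Fin n → ℂ) (j : Fin (q + 1)) :
    (Fin (q + 1) → Fin n) → ℂ :=
  fun i => if (j : ℕ) < q then (if i (j + 1) = i 0 then w j (i j) else 0) else w j (i j)

/-- Main theorem, no-arrows case: the BMP `∘(B_q, B_0, B_1, …, B_{q-1})`
(the k-th factor of the product carries the summation index in its k-th mode)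
of the tensors obtained from the activation vectors `w_0, …, w_q` by the
blow/forget procedure equals the rank-1 total tensor `w_0 ⊗ w_1 ⊗ ⋯ ⊗ w_q`. -/
theorem no_arrows_network_bmp {n q : ℕ} (hq : 0 < q) (w : Fin (q + 1) → Fin n → ℂ) :
    ∀ i : Fin (q + 1) → Fin n,
      (∑ h : Fin n, ∏ k : Fin (q + 1), procTensor w (k - 1) (Function.update i k h))
        = ∏ j : Fin (q + 1), w j (i j) := by
  intro i
  have hone : (1 : Fin (q + 1)) ≠ 0 := by
    intro h
    have := congrArg Fin.val h
    simp [Fin.val_one, Nat.mod_eq_of_lt (by omega : 1 < q + 1)] at this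
  have key : ∀ k : Fin (q + 1), k ≠ 0 → ((k - 1 : Fin (q + 1)) : ℕ) < q := by
    intro k hk
    by_contra h
    have h1 : (k - 1 : Fin (q + 1)) = Fin.last q := by
      apply Fin.ext
      have := (k - 1 : Fin (q + 1)).isLt
      simp [Fin.val_last]; omega
    have : k = Fin.last q + 1 := by
      rw [← h1]; exact (sub_add_cancel k 1).symm
    rw [this] at hk
    apply hk
    apply Fin.ext
    simp [Fin.val_add, Fin.val_last, Fin.val_one, Nat.mod_eq_of_lt (by omega : 1 < q + 1)]
  rw [Finset.sum_eq_single (i 0)]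
  · have hfac : ∀ k : Fin (q + 1),
        procTensor w (k - 1) (Function.update i k (i 0)) = w (k - 1) (i (k - 1)) := by
      intro k
      by_cases hk : k = 0
      · subst hk
        rw [Function.update_eq_self]
        unfold procTensor
        rw [if_neg]
        have : ((0 : Fin (q+1)) - 1) = (-1 : Fin (q+1)) := zero_sub 1
        rw [this]
        simp [Fin.coe_neg_one]
      · unfold procTensor
        rw [if_pos (key k hk)]
        have h1 : (k - 1 : Fin (q + 1)) + 1 = k := sub_add_cancel k 1
        have h2 : (k - 1 : Fin (q + 1)) ≠ k := by
          intro h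
          apply hone
          have : k - 1 + 1 = k + 1 := by rw [h]
          rw [h1] at this
          have := congrArg (· - k) this
          simpa using this.symm
        rw [h1, Function.update_self, Function.update_of_ne (Ne.symm hk),
          Function.update_of_ne h2, if_pos rfl]
    rw [Finset.prod_congr rfl (fun k _ => hfac k)]
    exact Fintype.prod_equiv (Equiv.subRight (1 : Fin (q+1))) _ _ (fun k => rfl)
  · intro h _ hh
    apply Finset.prod_eq_zero (Finset.mem_univ (1 : Fin (q + 1)))
    unfold procTensor
    rw [if_pos (key 1 hone)]
    have h1 : (1 - 1 : Fin (q + 1)) + 1 = 1 := sub_add_cancel 1 1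
    rw [h1, Function.update_self, Function.update_of_ne (Ne.symm hone), if_neg hh]
  · intro h; exact absurd (Finset.mem_univ _) h
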